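/- Let I_{1,k+1} denote the odd unimodular lattice with orthogonal basis h, e₁, …, e_{k+1} where h² = 1 and eᵢ² = −1, and view I_{1,k} as the sublattice spanned by h, e₁, …, e_k. Suppose v ∈ I_{1,k} has v·v = 1 and its orthogonal complement in I_{1,k} is Λ. Then the orthogonal complement of 2v − e_{k+1} in I_{1,k+1} is isomorphic (as a lattice) to Λ ⊕ ⟨−3⟩. -/

import Mathlib

open BigOperators Matrix

/-- Gram matrix of the odd unimodular lattice `I_{1,n-1}`: diagonal `(1, -1, …, -1)`. -/
def hypMat (n : ℕ) : Matrix (Fin n) (Fin n) ℤ :=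
  Matrix.diagonal fun i => if (i : ℕ) = 0 then 1 else -1

/-- The bilinear form of `I_{1,n-1}` on `Fin n → ℤ`. -/
def bilin (n : ℕ) (x y : Fin n → ℤ) : ℤ :=
  x ⬝ᵥ (hypMat n).mulVec y

/-- The orthogonal complement of `v` in `I_{1,n-1}`. -/
def perp (n : ℕ) (v : Fin n → ℤ) : Submodule ℤ (Fin n → ℤ) where
  carrier := {x | bilin n v x = 0}
  add_mem' := by
    intro a b ha hb
    simp only [Set.mem_setOf_eq, bilin, Matrix.mulVec_add, dotProduct_add] at *
    omega
  zero_mem' := by simp [bilin]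
  smul_mem' := by
    intro c x hx
    simp only [Set.mem_setOf_eq, bilin] at *
    rw [Matrix.mulVec_smul, dotProduct_smul, hx, smul_zero]

lemma bilin_apply (n : ℕ) (x y : Fin n → ℤ) :
    bilin n x y = ∑ i, x i * ((if (i : ℕ) = 0 then 1 else -1) * y i) := by
  simp [bilin, hypMat, dotProduct, Matrix.mulVec_diagonal]

lemma bilin_symm (n : ℕ) (x y : Fin n → ℤ) : bilin n x y = bilin n y x := by
  simp only [bilin_apply]; apply Finset.sum_congr rfl; intro i _; ring

lemma bilin_add_right (n : ℕ) (x y z : Fin n → ℤ) :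
    bilin n x (y + z) = bilin n x y + bilin n x z := by
  simp only [bilin_apply, ← Finset.sum_add_distrib]
  apply Finset.sum_congr rfl; intro i _; simp only [Pi.add_apply, Pi.sub_apply, Pi.smul_apply, smul_eq_mul]; split_ifs <;> ring

lemma bilin_sub_right (n : ℕ) (x y z : Fin n → ℤ) :
    bilin n x (y - z) = bilin n x y - bilin n x z := by
  simp only [bilin_apply, ← Finset.sum_sub_distrib]
  apply Finset.sum_congr rfl; intro i _; simp only [Pi.add_apply, Pi.sub_apply, Pi.smul_apply, smul_eq_mul]; split_ifs <;> ring

lemma bilin_smul_right (n : ℕ) (c : ℤ) (x y : Fin n → ℤ) :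
    bilin n x (c • y) = c * bilin n x y := by
  simp only [bilin_apply, Finset.mul_sum]
  apply Finset.sum_congr rfl; intro i _; simp only [Pi.add_apply, Pi.sub_apply, Pi.smul_apply, smul_eq_mul]; split_ifs <;> ring

lemma bilin_single_right (n : ℕ) (x : Fin n → ℤ) (j : Fin n) (c : ℤ) :
    bilin n x (Pi.single j c) = x j * ((if (j : ℕ) = 0 then 1 else -1) * c) := by
  rw [bilin_apply]
  rw [Finset.sum_eq_single j]
  · simp
  · intro i _ hij; simp [Pi.single_apply, hij]
  · simp


lemma bilin_sub_left (n : ℕ) (x y z : Fin n → ℤ) :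
    bilin n (x - y) z = bilin n x z - bilin n y z := by
  rw [bilin_symm, bilin_sub_right, bilin_symm n z x, bilin_symm n z y]

lemma bilin_smul_left (n : ℕ) (c : ℤ) (x y : Fin n → ℤ) :
    bilin n (c • x) y = c * bilin n x y := by
  rw [bilin_symm, bilin_smul_right, bilin_symm n y x]

lemma bilin_add_left (n : ℕ) (x y z : Fin n → ℤ) :
    bilin n (x + y) z = bilin n x z + bilin n y z := by
  rw [bilin_symm, bilin_add_right, bilin_symm n z x, bilin_symm n z y]

lemma mem_perp {n : ℕ} {v x : Fin n → ℤ} : x ∈ perp n v ↔ bilin n v x = 0 := Iff.rfl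

set_option maxHeartbeats 1600000 in
/-- View `I_{1,k}` inside `I_{1,k+1}` as the vectors vanishing on the
last coordinate `e_{k+1}`. If `v ∈ I_{1,k}` has `v·v = 1` with orthogonal complement `Λ`
in `I_{1,k}`, then the orthogonal complement of `2v − e_{k+1}` in `I_{1,k+1}` is
isomorphic, as a lattice, to `Λ ⊕ ⟨−3⟩`. -/
theorem stmt6 (k : ℕ) (v : Fin (k + 2) → ℤ) (hv0 : v (Fin.last (k + 1)) = 0)
    (hvv : bilin (k + 2) v v = 1)
    (Λ : Submodule ℤ (Fin (k + 2) → ℤ))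
    (hΛ : Λ = perp (k + 2) v ⊓
      LinearMap.ker (LinearMap.proj (R := ℤ) (φ := fun _ : Fin (k + 2) => ℤ)
        (Fin.last (k + 1)))) :
    ∃ f : (perp (k + 2) (2 • v - Pi.single (Fin.last (k + 1)) 1)) ≃ₗ[ℤ] (Λ × ℤ),
      ∀ x y : (perp (k + 2) (2 • v - Pi.single (Fin.last (k + 1)) 1)),
        bilin (k + 2) (x : Fin (k + 2) → ℤ) (y : Fin (k + 2) → ℤ)
          = bilin (k + 2) ((f x).1 : Fin (k + 2) → ℤ) ((f y).1 : Fin (k + 2) → ℤ)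
            + (-3) * ((f x).2 * (f y).2) := by
  set e : Fin (k+2) → ℤ := Pi.single (Fin.last (k+1)) 1 with he
  set u : Fin (k+2) → ℤ := v - e - e with hu
  have hlne : ((Fin.last (k+1) : Fin (k+2)) : ℕ) ≠ 0 := by simp [Fin.val_last]
  have hxe : ∀ x : Fin (k+2) → ℤ, bilin (k+2) x e = -(x (Fin.last (k+1))) := by
    intro x; rw [he, bilin_single_right]; simp [hlne]
  have hve : bilin (k+2) v e = 0 := by rw [hxe, hv0, neg_zero]
  have hvu : bilin (k+2) v u = 1 := by
    rw [hu, bilin_sub_right, bilin_sub_right, hve, hvv]; ring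
  have hul : u (Fin.last (k+1)) = -2 := by simp [hu, he, hv0, Pi.single_apply]
  have hue : bilin (k+2) u e = 2 := by rw [hxe, hul]; ring
  have huv : bilin (k+2) u v = 1 := by rw [bilin_symm]; exact hvu
  have huu : bilin (k+2) u u = -3 := by
    nth_rewrite 2 [hu]
    rw [bilin_sub_right, bilin_sub_right, hue, huv]; ring
  have hw : (2 • v - Pi.single (Fin.last (k+1)) 1 : Fin (k+2) → ℤ) = v + v - e := by
    funext i; simp [he, two_smul]
  have memW : ∀ x : Fin (k+2) → ℤ,
      x ∈ perp (k+2) (2 • v - Pi.single (Fin.last (k+1)) 1) ↔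
        bilin (k+2) v x + bilin (k+2) v x + x (Fin.last (k+1)) = 0 := by
    intro x
    rw [mem_perp, hw, bilin_sub_left, bilin_add_left, bilin_symm (k+2) e x, hxe]
    constructor <;> intro h <;> linarith
  have memΛ : ∀ x : Fin (k+2) → ℤ,
      x ∈ Λ ↔ bilin (k+2) v x = 0 ∧ x (Fin.last (k+1)) = 0 := by
    intro x
    rw [hΛ, Submodule.mem_inf, mem_perp, LinearMap.mem_ker, LinearMap.proj_apply]
  have hmem1 : ∀ x : perp (k+2) (2 • v - Pi.single (Fin.last (k+1)) 1),
      (x : Fin (k+2) → ℤ) - bilin (k+2) v x • u ∈ Λ := by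
    intro ⟨x, hx⟩
    rw [memW] at hx
    rw [memΛ]
    constructor
    · rw [bilin_sub_right, bilin_smul_right, hvu]; ring
    · simp only [Pi.sub_apply, Pi.smul_apply, smul_eq_mul, hul]
      linarith
  have hmem2 : ∀ (p : Λ × ℤ), (p.1 : Fin (k+2) → ℤ) + p.2 • u ∈
      perp (k+2) (2 • v - Pi.single (Fin.last (k+1)) 1) := by
    intro p
    obtain ⟨h1, h2⟩ := (memΛ _).1 p.1.2
    rw [memW, bilin_add_right, bilin_smul_right, hvu, h1]
    simp only [Pi.add_apply, Pi.smul_apply, smul_eq_mul, hul, h2]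
    ring
  refine ⟨{ toFun := fun x =>
              (⟨(x : Fin (k+2) → ℤ) - bilin (k+2) v x • u, hmem1 x⟩, bilin (k+2) v x),
            invFun := fun p => ⟨(p.1 : Fin (k+2) → ℤ) + p.2 • u, hmem2 p⟩,
            map_add' := ?_, map_smul' := ?_, left_inv := ?_, right_inv := ?_ }, ?_⟩
  · intro a b
    have hab : bilin (k+2) v ((a : Fin (k+2) → ℤ) + (b : Fin (k+2) → ℤ))
        = bilin (k+2) v a + bilin (k+2) v b := bilin_add_right (k+2) v a b
    refine Prod.ext (Subtype.ext ?_) ?_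
    · simp only [Submodule.coe_add, Prod.fst_add, hab]
      module
    · simpa using hab
  · intro c a
    have hca : bilin (k+2) v (c • (a : Fin (k+2) → ℤ)) = c * bilin (k+2) v a :=
      bilin_smul_right (k+2) c v a
    refine Prod.ext (Subtype.ext ?_) ?_
    · simp only [SetLike.val_smul, Prod.smul_fst, hca]
      module
    · simpa using hca
  · intro x
    apply Subtype.ext
    simp
  · intro p
    have h1 : bilin (k+2) v ((p.1 : Fin (k+2) → ℤ) + p.2 • u) = p.2 := by
      rw [bilin_add_right, bilin_smul_right, hvu, ((memΛ _).1 p.1.2).1]; ring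
    refine Prod.ext (Subtype.ext ?_) ?_
    · show (p.1 : Fin (k+2) → ℤ) + p.2 • u
          - bilin (k+2) v ((p.1 : Fin (k+2) → ℤ) + p.2 • u) • u = p.1
      rw [h1]
      exact add_sub_cancel_right _ _
    · simpa using h1
  · intro x y
    have hx := (memW _).1 x.2
    have hy := (memW _).1 y.2
    have hxu : bilin (k+2) (x : Fin (k+2) → ℤ) u = -3 * bilin (k+2) v x := by
      rw [hu, bilin_sub_right, bilin_sub_right, hxe, bilin_symm (k+2) _ v]
      linarith
    have hyu : bilin (k+2) u (y : Fin (k+2) → ℤ) = -3 * bilin (k+2) v y := by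
      rw [bilin_symm, hu, bilin_sub_right, bilin_sub_right, hxe, bilin_symm (k+2) _ v]
      linarith
    simp only [LinearEquiv.coe_mk, LinearMap.coe_mk, AddHom.coe_mk]
    rw [bilin_sub_right, bilin_smul_right, bilin_sub_left, bilin_sub_left,
      bilin_smul_left, bilin_smul_left, hxu, hyu, huu]
    ring
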